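/- Let ν be a probability measure on ℝ with finite second moment, let q ≥ 1, let g ∈ C²(ℝ) with ‖g''‖_{L^q(ℝ)} < ∞, and let a ∈ ℝ. Then Var_ν( g'(a − ·) ) ≤ 2^{−1/q}·‖g''‖²_{L^q(ℝ)}·( Var_ν(id) )^{(q−1)/q}. -/

import Mathlib

open MeasureTheory Real Filter
open scoped ENNReal

noncomputable section

/-- Covariance of two functions under a measure on `ℝ`. -/
def covM (ν : Measure ℝ) (f g : ℝ → ℝ) : ℝ :=
  (∫ t, f t * g t ∂ν) - (∫ t, f t ∂ν) * (∫ t, g t ∂ν)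

/-- Variance of a function under a measure on `ℝ`. -/
def varM (ν : Measure ℝ) (f : ℝ → ℝ) : ℝ := covM ν f f

/-- Variance of the identity function under a measure on `ℝ`. -/
def varId (ν : Measure ℝ) : ℝ := varM ν (fun t => t)

/-- `L^q(ℝ)` norm. -/
def LqNorm (f : ℝ → ℝ) (q : ℝ) : ℝ := (∫ t : ℝ, |f t| ^ q) ^ (1/q)

lemma rpow_le_one_add {x r : ℝ} (hx : 0 ≤ x) (hr0 : 0 ≤ r) (hr1 : r ≤ 1) :
    x ^ r ≤ 1 + x := by
  rcases le_total x 1 with h | h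
  · have := Real.rpow_le_one hx h hr0
    linarith
  · have := Real.rpow_le_rpow_of_exponent_le h hr1
    rw [Real.rpow_one] at this
    linarith

lemma memLp_ofReal_of_integrable_rpow {α : Type*} [MeasurableSpace α] {μ : Measure α}
    {h : α → ℝ} {q : ℝ} (hq : 0 < q)
    (hm : AEStronglyMeasurable h μ) (hint : Integrable (fun x => |h x| ^ q) μ) :
    MemLp h (ENNReal.ofReal q) μ := by
  have hq0 : ENNReal.ofReal q ≠ 0 := by simp [ENNReal.ofReal_eq_zero, not_le, hq]
  have hqt : ENNReal.ofReal q ≠ ∞ := ENNReal.ofReal_ne_top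
  refine (memLp_norm_rpow_iff (q := ENNReal.ofReal q) (p := ENNReal.ofReal q) hm hq0 hqt).mp ?_
  rw [ENNReal.div_self hq0 hqt, memLp_one_iff_integrable]
  simpa only [Real.norm_eq_abs, ENNReal.toReal_ofReal hq.le] using hint

lemma integral_rpow_le {α : Type*} [MeasurableSpace α] {μ : Measure α} [IsProbabilityMeasure μ]
    {h : α → ℝ} {r : ℝ} (hr0 : 0 ≤ r) (hr1 : r ≤ 1) (hnn : ∀ x, 0 ≤ h x)
    (hm : AEStronglyMeasurable h μ) (hint : Integrable h μ) :
    ∫ x, h x ^ r ∂μ ≤ (∫ x, h x ∂μ) ^ r := by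
  rcases eq_or_lt_of_le hr0 with hr0' | hr0'
  · simp [← hr0']
  rcases eq_or_lt_of_le hr1 with hr1' | hr1'
  · simp [hr1']
  have hpq : (1/r).HolderConjugate (1/(1-r)) := by
    rw [Real.holderConjugate_iff]
    constructor
    · rw [lt_div_iff₀ hr0']; linarith
    · rw [one_div, inv_inv, one_div, inv_inv]; ring
  have hf : MemLp (fun x => h x ^ r) (ENNReal.ofReal (1/r)) μ := by
    have h1 : ENNReal.ofReal (1/r) = 1 / ENNReal.ofReal r := by
      rw [one_div, one_div, ENNReal.ofReal_inv_of_pos hr0']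
    rw [h1]
    have h2 := (memLp_norm_rpow_iff (q := ENNReal.ofReal r) (p := 1) hm
      (by simp [ENNReal.ofReal_eq_zero, not_le, hr0']) ENNReal.ofReal_ne_top).mpr
      (memLp_one_iff_integrable.mpr hint)
    have heq : (fun x => ‖h x‖ ^ (ENNReal.ofReal r).toReal) = fun x => h x ^ r := by
      funext x
      rw [ENNReal.toReal_ofReal hr0, Real.norm_eq_abs, abs_of_nonneg (hnn x)]
    rwa [heq] at h2
  have hone : MemLp (fun _ : α => (1:ℝ)) (ENNReal.ofReal (1/(1-r))) μ := memLp_const 1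
  have H := integral_mul_le_Lp_mul_Lq_of_nonneg hpq
    (Eventually.of_forall fun x => Real.rpow_nonneg (hnn x) r)
    (Eventually.of_forall fun _ => zero_le_one) hf hone
  simp only [mul_one] at H
  refine H.trans (le_of_eq ?_)
  have h1 : ∀ x, (h x ^ r) ^ (1/r) = h x := fun x => by
    rw [← Real.rpow_mul (hnn x), mul_one_div_cancel hr0'.ne', Real.rpow_one]
  have h2 : (∫ a, (h a ^ r) ^ (1/r) ∂μ) = ∫ a, h a ∂μ := by simp_rw [h1]
  have h3 : (∫ _a : α, (1:ℝ) ^ (1/(1-r)) ∂μ) = 1 := by simp [measure_univ]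
  rw [h2, h3, one_div_one_div, Real.one_rpow, mul_one]


lemma deriv_diff_le_aux {q : ℝ} (hq : 1 ≤ q) {g : ℝ → ℝ} (hg : ContDiff ℝ 2 g)
    (hgq : Integrable (fun t : ℝ => |deriv (deriv g) t| ^ q))
    {x y : ℝ} (hxy : y ≤ x) :
    |deriv g x - deriv g y| ≤ LqNorm (deriv (deriv g)) q * |x - y| ^ ((q-1)/q) := by
  have hq0 : (0:ℝ) < q := lt_of_lt_of_le one_pos hq
  have hd1 : ContDiff ℝ 1 (deriv g) := by
    have hg' : ContDiff ℝ (1+1) g := by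
      rwa [show ((1:WithTop ℕ∞)+1) = 2 by norm_num]
    exact (contDiff_succ_iff_deriv.mp hg').2.2
  have hdiff : ∀ t : ℝ, DifferentiableAt ℝ (deriv g) t :=
    fun t => (hd1.differentiable one_ne_zero) t
  have hcont2 : Continuous (deriv (deriv g)) := hd1.continuous_deriv le_rfl
  have hFTC : ∫ t in y..x, deriv (deriv g) t = deriv g x - deriv g y :=
    intervalIntegral.integral_deriv_eq_sub (fun t _ => hdiff t)
      (hcont2.intervalIntegrable y x)
  set S : Set ℝ := Set.Ioc y x with hS
  haveI : IsFiniteMeasure (volume.restrict S) :=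
    ⟨by rw [Measure.restrict_apply_univ]; exact measure_Ioc_lt_top⟩
  have hstep1 : |deriv g x - deriv g y| ≤ ∫ t in S, |deriv (deriv g) t| := by
    rw [← hFTC, intervalIntegral.integral_of_le hxy]
    simpa [Real.norm_eq_abs] using
      norm_integral_le_integral_norm (μ := volume.restrict S) (deriv (deriv g))
  have habs_int : Integrable (fun t => |deriv (deriv g) t| ^ q) volume := by
    simpa [abs_abs] using hgq
  have hM0 : (0:ℝ) ≤ ∫ t : ℝ, |deriv (deriv g) t| ^ q :=
    integral_nonneg fun t => Real.rpow_nonneg (abs_nonneg _) q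
  have hsub : ∫ t in S, |deriv (deriv g) t| ^ q ≤ ∫ t : ℝ, |deriv (deriv g) t| ^ q :=
    setIntegral_le_integral habs_int
      (Eventually.of_forall fun t => Real.rpow_nonneg (abs_nonneg _) q)
  rcases eq_or_lt_of_le hq with hq1 | hq1
  · -- q = 1
    rw [← hq1] at habs_int ⊢
    have h1 : |deriv g x - deriv g y| ≤ ∫ t : ℝ, |deriv (deriv g) t| := by
      refine hstep1.trans ?_
      refine setIntegral_le_integral ?_ (Eventually.of_forall fun t => abs_nonneg _)
      simpa [Real.rpow_one] using habs_int
    have he : LqNorm (deriv (deriv g)) 1 * |x - y| ^ (((1:ℝ)-1)/1) = ∫ t : ℝ, |deriv (deriv g) t| := by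
      norm_num [LqNorm, Real.rpow_one]
    rw [he]
    exact h1
  · -- 1 < q
    have hpq : q.HolderConjugate (q/(q-1)) := Real.HolderConjugate.conjExponent hq1
    have hinv : 1/(q/(q-1)) = (q-1)/q := by
      field_simp
    have hmemS : MemLp (fun t => |deriv (deriv g) t|) (ENNReal.ofReal q) (volume.restrict S) := by
      refine MemLp.restrict S ?_
      exact memLp_ofReal_of_integrable_rpow hq0 hcont2.abs.aestronglyMeasurable
        (by simpa [abs_abs] using hgq)
    have hone : MemLp (fun _ : ℝ => (1:ℝ)) (ENNReal.ofReal (q/(q-1))) (volume.restrict S) :=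
      memLp_const 1
    have H := integral_mul_le_Lp_mul_Lq_of_nonneg hpq
      (Eventually.of_forall fun t => abs_nonneg _)
      (Eventually.of_forall fun _ => zero_le_one) hmemS hone
    simp only [mul_one] at H
    have h2 : (∫ _t in S, (1:ℝ) ^ (q/(q-1)) ∂volume) = x - y := by
      rw [MeasureTheory.integral_const]
      simp [Measure.restrict_apply_univ, hS, Real.volume_Ioc,
        ENNReal.toReal_ofReal (sub_nonneg.mpr hxy), hxy]
    have h3 : (∫ t in S, |deriv (deriv g) t| ^ q ∂volume) ^ (1/q)
        ≤ LqNorm (deriv (deriv g)) q := by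
      exact Real.rpow_le_rpow (integral_nonneg fun t => Real.rpow_nonneg (abs_nonneg _) q)
        hsub (by positivity)
    calc |deriv g x - deriv g y| ≤ ∫ t in S, |deriv (deriv g) t| := hstep1
      _ ≤ (∫ t in S, |deriv (deriv g) t| ^ q ∂volume) ^ (1/q)
            * (∫ _t in S, (1:ℝ) ^ (q/(q-1)) ∂volume) ^ (1/(q/(q-1))) := H
      _ ≤ LqNorm (deriv (deriv g)) q * |x - y| ^ ((q-1)/q) := by
          rw [h2, hinv, abs_of_nonneg (sub_nonneg.mpr hxy)]
          refine mul_le_mul_of_nonneg_right h3 ?_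
          exact Real.rpow_nonneg (sub_nonneg.mpr hxy) _

lemma deriv_diff_le {q : ℝ} (hq : 1 ≤ q) {g : ℝ → ℝ} (hg : ContDiff ℝ 2 g)
    (hgq : Integrable (fun t : ℝ => |deriv (deriv g) t| ^ q)) (x y : ℝ) :
    |deriv g x - deriv g y| ≤ LqNorm (deriv (deriv g)) q * |x - y| ^ ((q-1)/q) := by
  rcases le_total y x with h | h
  · exact deriv_diff_le_aux hq hg hgq h
  · rw [abs_sub_comm, abs_sub_comm x y]
    exact deriv_diff_le_aux hq hg hgq h


lemma memLp_two_integrable_mul_self {ν : Measure ℝ} [IsProbabilityMeasure ν] {f : ℝ → ℝ}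
    (hf : MemLp f 2 ν) : Integrable (fun t => f t * f t) ν := by
  have h := hf.integrable_norm_rpow (by norm_num) (by norm_num)
  have heq : (fun t => ‖f t‖ ^ (2:ℝ≥0∞).toReal) = fun t => f t * f t := by
    funext t
    rw [show ((2:ℝ≥0∞)).toReal = ((2:ℕ):ℝ) by norm_num, Real.rpow_natCast,
      Real.norm_eq_abs, sq_abs, sq]
  rwa [heq] at h

lemma integrable_sub_sq_prod {ν : Measure ℝ} [IsProbabilityMeasure ν] {f : ℝ → ℝ}
    (hf : MemLp f 2 ν) :
    Integrable (fun z : ℝ × ℝ => (f z.1 - f z.2)^2) (ν.prod ν) := by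
  have hf1 : Integrable f ν := hf.integrable (by norm_num)
  have hf2 : Integrable (fun t => f t * f t) ν := memLp_two_integrable_mul_self hf
  have i1 : Integrable (fun z : ℝ×ℝ => (f z.1 * f z.1) * 1) (ν.prod ν) :=
    hf2.mul_prod (integrable_const 1)
  have i2 : Integrable (fun z : ℝ×ℝ => 1 * (f z.2 * f z.2)) (ν.prod ν) :=
    (integrable_const (1:ℝ)).mul_prod hf2
  have i3 : Integrable (fun z : ℝ×ℝ => f z.1 * f z.2) (ν.prod ν) := hf1.mul_prod hf1
  have hexp : (fun z : ℝ×ℝ => (f z.1 - f z.2)^2)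
      = fun z => ((f z.1 * f z.1) * 1 + 1 * (f z.2 * f z.2)) - 2 * (f z.1 * f z.2) := by
    funext z; ring
  rw [hexp]
  have i12 : Integrable (fun z : ℝ×ℝ => (f z.1 * f z.1) * 1 + 1 * (f z.2 * f z.2)) (ν.prod ν) :=
    i1.add i2
  have i3' : Integrable (fun z : ℝ×ℝ => 2 * (f z.1 * f z.2)) (ν.prod ν) := i3.const_mul 2
  exact i12.sub i3'

lemma double_integral_sq {ν : Measure ℝ} [IsProbabilityMeasure ν] {f : ℝ → ℝ}
    (hf : MemLp f 2 ν) :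
    ∫ z : ℝ × ℝ, (f z.1 - f z.2)^2 ∂(ν.prod ν) = 2 * varM ν f := by
  have hf1 : Integrable f ν := hf.integrable (by norm_num)
  have hf2 : Integrable (fun t => f t * f t) ν := memLp_two_integrable_mul_self hf
  have i1 : Integrable (fun z : ℝ×ℝ => (f z.1 * f z.1) * 1) (ν.prod ν) :=
    hf2.mul_prod (integrable_const 1)
  have i2 : Integrable (fun z : ℝ×ℝ => 1 * (f z.2 * f z.2)) (ν.prod ν) :=
    (integrable_const (1:ℝ)).mul_prod hf2
  have i3 : Integrable (fun z : ℝ×ℝ => f z.1 * f z.2) (ν.prod ν) := hf1.mul_prod hf1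
  have hexp : (fun z : ℝ×ℝ => (f z.1 - f z.2)^2)
      = fun z => ((f z.1 * f z.1) * 1 + 1 * (f z.2 * f z.2)) - 2 * (f z.1 * f z.2) := by
    funext z; ring
  have e1 : ∫ z : ℝ×ℝ, (f z.1 * f z.1) * 1 ∂(ν.prod ν)
      = (∫ t, f t * f t ∂ν) * (∫ _t : ℝ, (1:ℝ) ∂ν) :=
    integral_prod_mul (fun s => f s * f s) (fun _ => (1:ℝ))
  have e2 : ∫ z : ℝ×ℝ, 1 * (f z.2 * f z.2) ∂(ν.prod ν)
      = (∫ _t : ℝ, (1:ℝ) ∂ν) * (∫ t, f t * f t ∂ν) :=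
    integral_prod_mul (fun _ => (1:ℝ)) (fun s => f s * f s)
  have e3 : ∫ z : ℝ×ℝ, f z.1 * f z.2 ∂(ν.prod ν) = (∫ t, f t ∂ν) * (∫ t, f t ∂ν) :=
    integral_prod_mul f f
  have i12 : Integrable (fun z : ℝ×ℝ => (f z.1 * f z.1) * 1 + 1 * (f z.2 * f z.2)) (ν.prod ν) :=
    i1.add i2
  have i3' : Integrable (fun z : ℝ×ℝ => 2 * (f z.1 * f z.2)) (ν.prod ν) := i3.const_mul 2
  rw [hexp, integral_sub i12 i3', integral_add i1 i2, e1, e2,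
    MeasureTheory.integral_const_mul, e3]
  simp only [varM, covM, integral_const, measure_univ, probReal_univ, ENNReal.toReal_one, smul_eq_mul,
    one_mul, mul_one]
  ring


/-- **Statement 15** (the key variance estimate (4.13)). -/
theorem statement15
    (ν : Measure ℝ) [IsProbabilityMeasure ν]
    (hmom : MemLp (fun t : ℝ => t) 2 ν)
    {q : ℝ} (hq : 1 ≤ q)
    {g : ℝ → ℝ} (hg : ContDiff ℝ 2 g)
    (hgq : Integrable (fun t : ℝ => |deriv (deriv g) t| ^ q))
    (a : ℝ) :
    varM ν (fun t => deriv g (a - t))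
      ≤ (2:ℝ) ^ (-(1/q)) * (LqNorm (deriv (deriv g)) q)^2 * (varId ν) ^ ((q-1)/q) := by
  have hq0 : (0:ℝ) < q := lt_of_lt_of_le one_pos hq
  set M : ℝ := LqNorm (deriv (deriv g)) q with hMdef
  set r : ℝ := (q-1)/q with hrdef
  have hr0 : 0 ≤ r := div_nonneg (by linarith) hq0.le
  have hr1 : r ≤ 1 := by rw [hrdef, div_le_one hq0]; linarith
  have hM : 0 ≤ M := Real.rpow_nonneg
    (integral_nonneg fun t => Real.rpow_nonneg (abs_nonneg _) q) _
  set f : ℝ → ℝ := fun t => deriv g (a - t) with hfdef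
  have hd1 : ContDiff ℝ 1 (deriv g) := by
    have hg' : ContDiff ℝ (1+1) g := by
      rwa [show ((1:WithTop ℕ∞)+1) = 2 by norm_num]
    exact (contDiff_succ_iff_deriv.mp hg').2.2
  have hcf : Continuous f := hd1.continuous.comp (continuous_const.sub continuous_id)
  have hA : ∀ s t : ℝ, |f s - f t| ≤ M * |s - t| ^ r := by
    intro s t
    have h := deriv_diff_le hq hg hgq (a - s) (a - t)
    rw [show a - s - (a - t) = -(s - t) by ring, abs_neg] at h
    exact h
  -- f ∈ L²
  have hfL2 : MemLp f 2 ν := by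
    set C : ℝ := |f 0| with hC
    have hb : MemLp (fun t : ℝ => (C + M) + M * ‖t‖) 2 ν :=
      (memLp_const (C + M)).add ((hmom.norm).const_mul M)
    refine hb.of_le hcf.aestronglyMeasurable (Eventually.of_forall fun t => ?_)
    have h1 : |f t| ≤ C + M * |t| ^ r := by
      have h2 := hA t 0
      rw [sub_zero] at h2
      calc |f t| ≤ |f 0| + |f t - f 0| := by
            have := abs_sub_abs_le_abs_sub (f t) (f 0)
            have h3 := abs_add_le (f 0) (f t - f 0)
            simp only [add_sub_cancel] at h3
            linarith [h3]
        _ ≤ C + M * |t| ^ r := by rw [hC]; exact add_le_add le_rfl h2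
    have h4 : |t| ^ r ≤ 1 + |t| := rpow_le_one_add (abs_nonneg t) hr0 hr1
    have h5 : (0:ℝ) ≤ (C + M) + M * ‖t‖ := by
      have : (0:ℝ) ≤ C := abs_nonneg _
      have : (0:ℝ) ≤ M * ‖t‖ := mul_nonneg hM (norm_nonneg t)
      positivity
    rw [Real.norm_of_nonneg h5, Real.norm_eq_abs t]
    have h6 : M * |t| ^ r ≤ M * (1 + |t|) := mul_le_mul_of_nonneg_left h4 hM
    calc |f t| ≤ C + M * |t| ^ r := h1
      _ ≤ C + M * (1 + |t|) := by linarith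
      _ = (C + M) + M * |t| := by ring
  -- double integral identities
  have hkey1 : ∫ z : ℝ × ℝ, (f z.1 - f z.2)^2 ∂(ν.prod ν) = 2 * varM ν f :=
    double_integral_sq hfL2
  have hkey2 : ∫ z : ℝ × ℝ, (z.1 - z.2)^2 ∂(ν.prod ν) = 2 * varId ν :=
    double_integral_sq hmom
  have hsq_int : Integrable (fun z : ℝ × ℝ => (z.1 - z.2)^2) (ν.prod ν) :=
    integrable_sub_sq_prod hmom
  have hvar0 : 0 ≤ varId ν := by
    have h := integral_nonneg (μ := ν.prod ν)
      (f := fun z : ℝ × ℝ => (z.1 - z.2)^2) (fun z => sq_nonneg _)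
    rw [hkey2] at h
    linarith
  -- integrability of the majorant
  have hu_cont : Continuous (fun z : ℝ × ℝ => ((z.1 - z.2)^2) ^ r) :=
    (Real.continuous_rpow_const hr0).comp ((continuous_fst.sub continuous_snd).pow 2)
  have hu_int : Integrable (fun z : ℝ × ℝ => ((z.1 - z.2)^2) ^ r) (ν.prod ν) := by
    refine Integrable.mono' ((integrable_const (1:ℝ)).add hsq_int)
      hu_cont.aestronglyMeasurable (Eventually.of_forall fun z => ?_)
    rw [Real.norm_eq_abs, abs_of_nonneg (Real.rpow_nonneg (sq_nonneg _) r)]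
    exact rpow_le_one_add (sq_nonneg _) hr0 hr1
  -- pointwise bound
  have hpt : ∀ z : ℝ × ℝ, (f z.1 - f z.2)^2 ≤ M^2 * ((z.1 - z.2)^2) ^ r := by
    intro z
    have h1 := hA z.1 z.2
    have h2 : (f z.1 - f z.2)^2 ≤ (M * |z.1 - z.2| ^ r)^2 := by
      rw [← sq_abs (f z.1 - f z.2)]
      exact pow_le_pow_left₀ (abs_nonneg _) h1 2
    refine h2.trans (le_of_eq ?_)
    rw [mul_pow]
    congr 1
    have hx := abs_nonneg (z.1 - z.2)
    rw [← Real.rpow_natCast (|z.1 - z.2| ^ r) 2, ← Real.rpow_mul hx, mul_comm,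
      Real.rpow_mul hx, Real.rpow_natCast, sq_abs]
  -- main chain
  have hchain : 2 * varM ν f ≤ M^2 * ((2:ℝ) ^ r * varId ν ^ r) := by
    have hmono : ∫ z : ℝ × ℝ, (f z.1 - f z.2)^2 ∂(ν.prod ν)
        ≤ ∫ z : ℝ × ℝ, M^2 * ((z.1 - z.2)^2) ^ r ∂(ν.prod ν) := by
      refine integral_mono_of_nonneg (Eventually.of_forall fun z => sq_nonneg _)
        (hu_int.const_mul _) (Eventually.of_forall fun z => hpt z)
    have hconst : ∫ z : ℝ × ℝ, M^2 * ((z.1 - z.2)^2) ^ r ∂(ν.prod ν)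
        = M^2 * ∫ z : ℝ × ℝ, ((z.1 - z.2)^2) ^ r ∂(ν.prod ν) :=
      MeasureTheory.integral_const_mul _ _
    have hjensen : ∫ z : ℝ × ℝ, ((z.1 - z.2)^2) ^ r ∂(ν.prod ν)
        ≤ (∫ z : ℝ × ℝ, (z.1 - z.2)^2 ∂(ν.prod ν)) ^ r :=
      integral_rpow_le hr0 hr1 (fun z => sq_nonneg _)
        ((continuous_fst.sub continuous_snd).pow 2).aestronglyMeasurable hsq_int
    have h2r : ((2:ℝ) * varId ν) ^ r = (2:ℝ) ^ r * varId ν ^ r :=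
      Real.mul_rpow (by norm_num) hvar0
    calc 2 * varM ν f = ∫ z : ℝ × ℝ, (f z.1 - f z.2)^2 ∂(ν.prod ν) := hkey1.symm
      _ ≤ M^2 * ∫ z : ℝ × ℝ, ((z.1 - z.2)^2) ^ r ∂(ν.prod ν) := by
          rw [← hconst]; exact hmono
      _ ≤ M^2 * ((∫ z : ℝ × ℝ, (z.1 - z.2)^2 ∂(ν.prod ν)) ^ r) :=
          mul_le_mul_of_nonneg_left hjensen (sq_nonneg M)
      _ = M^2 * ((2:ℝ) ^ r * varId ν ^ r) := by rw [hkey2, h2r]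
  have h2 : (2:ℝ) ^ (-(1/q)) * 2 = (2:ℝ) ^ r := by
    have : (2:ℝ) ^ (-(1/q)) * (2:ℝ) ^ (1:ℝ) = (2:ℝ) ^ (-(1/q) + 1) :=
      (Real.rpow_add two_pos _ _).symm
    rw [Real.rpow_one] at this
    rw [this]
    congr 1
    rw [hrdef]
    field_simp
    ring
  have hfin : (2:ℝ) ^ r * (M^2 * varId ν ^ r)
      = 2 * ((2:ℝ) ^ (-(1/q)) * M^2 * varId ν ^ r) := by
    rw [← h2]; ring
  have := hchain
  nlinarith [hchain, hfin]

end
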